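/- arXiv:0710.3536 — 5 statements merged into one kernel-verified Lean document; each statement's English description precedes it below -/
import Mathlib

section
/- Suppose each property φ_i is monotonic. Then for every belief model for the initial game H, the restriction of H to the event RAT(φ) ∩ B*RAT(φ) is included (componentwise) in the outcome T_φ^∞ of the iterated elimination operator T_φ; that is, G_{RAT(φ) ∩ B*RAT(φ)} ⊆ T_φ^∞. -/
/-!
Epistemic analysis of arbitrary strategic games. The initial game `H` has
players `ι`, strategy sets `S i` (the full types, all nonempty) and payoff
functions `p i`. A restriction of `H` is a family `G : ∀ i, Set (S i)`,
ordered componentwise; this is a complete lattice with largest element `⊤ = H`.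
-/

open Set

universe u

/-- The `o`-th transfinite iterate of `T`, starting from `⊤ = H`. -/
noncomputable def lfpIter {D : Type u} [CompleteLattice D] (T : D → D) (o : Ordinal.{u}) : D :=
  Ordinal.limitRecOn (motive := fun _ => D) o ⊤ (fun _ ih => T ih)
    (fun o _ ih => ⨅ o' : {o' : Ordinal.{u} // o' < o}, ih o'.1 o'.2)

/-- The outcome `T^∞` of (iterating) `T`. -/
noncomputable def outcome {D : Type u} [CompleteLattice D] (T : D → D) : D :=
  lfpIter T (sInf {α : Ordinal.{u} | lfpIter T (α + 1) = lfpIter T α})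

/-- The operator `T_φ` of iterated elimination of strategies that are not `φ_i`-optimal:
`T_φ(G)_i = {s_i ∈ G_i | φ_i(s_i, G)}`. -/
def Topr {ι : Type u} {S : ι → Type u} (φ : ∀ i, S i → (∀ j, Set (S j)) → Prop)
    (G : ∀ i, Set (S i)) : ∀ i, Set (S i) :=
  fun i => {s | s ∈ G i ∧ φ i s G}

/-- `□E`: the event that every player believes the event `E`. -/
def box {ι Ω : Type u} (P : ι → Ω → Set Ω) (E : Set Ω) : Set Ω :=
  {ω | ∀ i, P i ω ⊆ E}

/-- `B*E`: the common belief event, `⋂_{k ≥ 1} □^k E`. -/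
def commonBelief {ι Ω : Type u} (P : ι → Ω → Set Ω) (E : Set Ω) : Set Ω :=
  ⋂ k : ℕ, (box P)^[k + 1] E

/-- `G_E`: the restriction of the game to the event `E`, given by the images of `E`
under the strategy functions `s̄_i`. -/
def restrOf {ι Ω : Type u} {S : ι → Type u} (sb : ∀ i, Ω → S i) (E : Set Ω) :
    ∀ i, Set (S i) := fun i => sb i '' E

/-- `RAT(φ)`: the event that each player `i` is `φ_i`-rational, i.e. that
`φ_i(s̄_i(ω), G_{P_i(ω)})` holds for every player `i`. -/
def RAT {ι Ω : Type u} {S : ι → Type u} (φ : ∀ i, S i → (∀ j, Set (S j)) → Prop)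
    (sb : ∀ i, Ω → S i) (P : ι → Ω → Set Ω) : Set Ω :=
  {ω | ∀ i, φ i (sb i ω) (restrOf sb (P i ω))}

lemma le_lfpIter {D : Type u} [CompleteLattice D] {T : D → D} (hT : Monotone T)
    {A : D} (hA : A ≤ T A) (o : Ordinal.{u}) : A ≤ lfpIter T o := by
  induction o using Ordinal.limitRecOn with
  | zero => simp [lfpIter]
  | add_one o ih =>
    rw [lfpIter, Ordinal.limitRecOn_add_one]
    exact hA.trans (hT ih)
  | limit o ho ih =>
    rw [lfpIter, Ordinal.limitRecOn_limit _ _ _ _ ho]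
    exact le_iInf fun o' => ih o'.1 o'.2

/-- if each `φ_i` is monotonic, then for every belief model
`(Ω, s̄, P)` for the initial game `H`,
`G_{RAT(φ) ∩ B*RAT(φ)} ⊆ T_φ^∞` (componentwise). -/
theorem restr_RAT_inter_commonBelief_le_outcome {ι : Type u} {S : ι → Type u}
    [∀ i, Nonempty (S i)] (p : ∀ i : ι, (∀ j, S j) → ℝ)
    {Ω : Type u} [Nonempty Ω] (sb : ∀ i, Ω → S i) (P : ι → Ω → Set Ω)
    (hP1 : ∀ i ω, (P i ω).Nonempty)
    (hP2 : ∀ i ω ω', ω' ∈ P i ω → P i ω' = P i ω)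
    (φ : ∀ i, S i → (∀ j, Set (S j)) → Prop)
    (hmono : ∀ i (s : S i) (G G' : ∀ j, Set (S j)), G ≤ G' → φ i s G → φ i s G') :
    restrOf sb (RAT φ sb P ∩ commonBelief P (RAT φ sb P)) ≤ outcome (Topr φ) := by
  set E := RAT φ sb P ∩ commonBelief P (RAT φ sb P) with hE
  -- P i ω ⊆ E for ω ∈ E
  have hPE : ∀ i ω, ω ∈ E → P i ω ⊆ E := by
    intro i ω hω ω' hω'
    obtain ⟨-, hB⟩ := hω
    have hB' := fun k => mem_iInter.1 hB k
    constructor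
    · have h0 := hB' 0
      rw [Function.iterate_one] at h0
      exact h0 i hω'
    · refine mem_iInter.2 fun k => ?_
      have h1 := hB' (k+1)
      rw [Function.iterate_succ_apply'] at h1
      exact h1 i hω'
  -- restrOf sb E is a post-fixpoint of Topr φ
  have hpost : restrOf sb E ≤ Topr φ (restrOf sb E) := by
    intro i s hs
    obtain ⟨ω, hω, rfl⟩ := hs
    refine ⟨⟨ω, hω, rfl⟩, ?_⟩
    have hrat : φ i (sb i ω) (restrOf sb (P i ω)) := hω.1 i
    exact hmono i _ _ _ (fun j => Set.image_mono (hPE i ω hω)) hrat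
  have hTmono : Monotone (Topr φ) := by
    intro G G' hGG' i s hs
    exact ⟨hGG' i hs.1, hmono i s G G' hGG' hs.2⟩
  exact (le_lfpIter hTmono hpost _)
end

section
/- Suppose each property φ_i is monotonic. Then for every knowledge model for the initial game H, the restriction of H to the common knowledge event K*RAT(φ) is included (componentwise) in the outcome T_φ^∞; that is, G_{K*RAT(φ)} ⊆ T_φ^∞. -/
/-!
Epistemic analysis of arbitrary strategic games. The initial game `H` has
players `ι`, strategy sets `S i` (the full types, all nonempty) and payoff
functions `p i`. A restriction of `H` is a family `G : ∀ i, Set (S i)`,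
ordered componentwise; this is a complete lattice with largest element `⊤ = H`.
-/

open Set

universe u

/-- if each `φ_i` is monotonic, then for every knowledge model
`(Ω, s̄, P)` for the initial game `H`, `G_{K*RAT(φ)} ⊆ T_φ^∞` (componentwise).
(Common knowledge `K*` is the common belief operator for knowledge correspondences.) -/
theorem restr_commonKnowledge_RAT_le_outcome {ι : Type u} {S : ι → Type u}
    [∀ i, Nonempty (S i)] (p : ∀ i : ι, (∀ j, S j) → ℝ)
    {Ω : Type u} [Nonempty Ω] (sb : ∀ i, Ω → S i) (P : ι → Ω → Set Ω)
    (hP1 : ∀ i ω, (P i ω).Nonempty)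
    (hP2 : ∀ i ω ω', ω' ∈ P i ω → P i ω' = P i ω)
    (hP3 : ∀ i ω, ω ∈ P i ω)
    (φ : ∀ i, S i → (∀ j, Set (S j)) → Prop)
    (hmono : ∀ i (s : S i) (G G' : ∀ j, Set (S j)), G ≤ G' → φ i s G → φ i s G') :
    restrOf sb (commonBelief P (RAT φ sb P)) ≤ outcome (Topr φ) := by
  set E := commonBelief P (RAT φ sb P) with hE
  set G := restrOf sb E with hG
  have hPE : ∀ i ω, ω ∈ E → P i ω ⊆ E := by
    intro i ω hω ω' hω'
    simp only [hE, commonBelief, mem_iInter] at hω ⊢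
    intro k
    have h := hω (k + 1)
    rw [Function.iterate_succ_apply'] at h
    exact h i hω'
  have Tmono : ∀ G G' : ∀ j, Set (S j), G ≤ G' → Topr φ G ≤ Topr φ G' := by
    intro A B hAB i s hs
    exact ⟨hAB i hs.1, hmono i s A B hAB hs.2⟩
  have hsub : G ≤ Topr φ G := by
    intro i s hs
    obtain ⟨ω, hω, rfl⟩ := hs
    refine ⟨⟨ω, hω, rfl⟩, ?_⟩
    have h1 : ω ∈ box P (RAT φ sb P) := by
      have := (mem_iInter.mp hω) 0
      simpa using this
    have hrat : ω ∈ RAT φ sb P := h1 i (hP3 i ω)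
    exact hmono i _ _ _ (fun j => Set.image_mono (hPE i ω hω)) (hrat i)
  have hle : ∀ o : Ordinal, G ≤ lfpIter (Topr φ) o := by
    intro o
    induction o using Ordinal.limitRecOn with
    | zero => simp [lfpIter]
    | add_one o ih =>
        rw [lfpIter, Ordinal.limitRecOn_add_one]
        exact le_trans hsub (Tmono _ _ ih)
    | limit o ho ih =>
        rw [lfpIter, Ordinal.limitRecOn_limit _ _ _ _ ho]
        exact le_iInf fun o' => ih o'.1 o'.2
  exact hle _
end

section
/- For every belief model for the initial game H, G_{RAT(br^g) ∩ B*RAT(br^g)} ⊆ T_{sd^l}^∞, where br^g is the global best response property with beliefs being joint pure strategies of the opponents, and T_{sd^l}^∞ is the outcome of iterated elimination (possibly transfinite) of strategies strictly dominated by another strategy in the current restriction. -/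
/-!
Epistemic analysis of arbitrary strategic games. The initial game `H` has
players `ι`, strategy sets `S i` (the full types, all nonempty) and payoff
functions `p i`. A restriction of `H` is a family `G : ∀ i, Set (S i)`,
ordered componentwise; this is a complete lattice with largest element `⊤ = H`.
-/

open Set

universe u

/-- `s'` strictly dominates `s` on the restriction `G` (for player `i`):
`p_i(s', s_{-i}) > p_i(s, s_{-i})` for all `s_{-i} ∈ G_{-i}`. -/
def StrDom {ι : Type u} [DecidableEq ι] {S : ι → Type u}
    (p : ∀ i : ι, (∀ j, S j) → ℝ) (G : ∀ j, Set (S j)) (i : ι) (s' s : S i) : Prop :=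
  ∀ t : ∀ j, S j, (∀ j, j ≠ i → t j ∈ G j) →
    p i (Function.update t i s) < p i (Function.update t i s')

/-- `sd^g_i(s, G)`: `s` is not strictly dominated on `G` by any strategy in `H_i`. -/
def sdg {ι : Type u} [DecidableEq ι] {S : ι → Type u}
    (p : ∀ i : ι, (∀ j, S j) → ℝ) (i : ι) (s : S i) (G : ∀ j, Set (S j)) : Prop :=
  ¬ ∃ s' : S i, StrDom p G i s' s

/-- `sd^l_i(s, G)`: `s` is not strictly dominated on `G` by any strategy in `G_i`. -/
def sdl {ι : Type u} [DecidableEq ι] {S : ι → Type u}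
    (p : ∀ i : ι, (∀ j, S j) → ℝ) (i : ι) (s : S i) (G : ∀ j, Set (S j)) : Prop :=
  ¬ ∃ s' ∈ G i, StrDom p G i s' s

/-- `br^g_i(s, G)`: `s` is a best response in `H_i` to some joint (pure) strategy
of the opponents held in `G`. -/
def brg {ι : Type u} [DecidableEq ι] {S : ι → Type u}
    (p : ∀ i : ι, (∀ j, S j) → ℝ) (i : ι) (s : S i) (G : ∀ j, Set (S j)) : Prop :=
  ∃ t : ∀ j, S j, (∀ j, j ≠ i → t j ∈ G j) ∧
    ∀ s' : S i, p i (Function.update t i s') ≤ p i (Function.update t i s)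

/-- for every belief model for the initial game `H`,
`G_{RAT(br^g) ∩ B*RAT(br^g)} ⊆ T_{sd^l}^∞`, where `br^g` is the global best
response property (beliefs being joint pure strategies of the opponents) and
`T_{sd^l}^∞` is the outcome of the (possibly transfinite) iterated elimination
of strategies strictly dominated by another strategy in the current restriction. -/
theorem restr_RAT_brg_inter_commonBelief_le_outcome_sdl {ι : Type u} [DecidableEq ι]
    {S : ι → Type u} [∀ i, Nonempty (S i)] (p : ∀ i : ι, (∀ j, S j) → ℝ)
    {Ω : Type u} [Nonempty Ω] (sb : ∀ i, Ω → S i) (P : ι → Ω → Set Ω)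
    (hP1 : ∀ i ω, (P i ω).Nonempty)
    (hP2 : ∀ i ω ω', ω' ∈ P i ω → P i ω' = P i ω) :
    restrOf sb (RAT (brg p) sb P ∩ commonBelief P (RAT (brg p) sb P))
      ≤ outcome (Topr (sdl p)) := by
  set T := Topr (sdl p) with hT
  set R := RAT (brg p) sb P with hR
  set E := R ∩ commonBelief P R with hEdef
  have hER : E ⊆ R := Set.inter_subset_left
  have hE : ∀ ω ∈ E, ∀ i, P i ω ⊆ E := by
    rintro ω ⟨hRω, hB⟩ i ω' hω'
    constructor
    · have h1 := Set.mem_iInter.1 hB 0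
      simpa [box] using h1 i hω'
    · refine Set.mem_iInter.2 fun k => ?_
      have h2 := Set.mem_iInter.1 hB (k + 1)
      rw [Function.iterate_succ'] at h2
      exact h2 i hω'
  have key : ∀ o : Ordinal.{u}, ∀ i, sb i '' E ⊆ lfpIter T o i := by
    intro o
    induction o using Ordinal.limitRecOn with
    | zero =>
      intro i s _
      simp [lfpIter, Set.top_eq_univ]
    | add_one o ih =>
      intro i s hs
      obtain ⟨ω, hω, rfl⟩ := hs
      obtain ⟨t, ht, hbest⟩ := (hER hω) i
      have hmem : lfpIter T (o + 1) = T (lfpIter T o) := by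
        simp [lfpIter]
      rw [hmem]
      refine ⟨ih i ⟨ω, hω, rfl⟩, ?_⟩
      rintro ⟨s', _, hdom⟩
      have htG : ∀ j, j ≠ i → t j ∈ lfpIter T o j := by
        intro j hj
        obtain ⟨ω', hω', hωeq⟩ := ht j hj
        exact hωeq ▸ ih j ⟨ω', hE ω hω i hω', rfl⟩
      exact absurd (hdom t htG) (not_lt.2 (hbest s'))
    | limit o ho ih =>
      intro i s hs
      have hlim : lfpIter T o = ⨅ o' : {o' : Ordinal.{u} // o' < o}, lfpIter T o'.1 := by
        rw [lfpIter, Ordinal.limitRecOn_limit _ _ _ _ ho]; rfl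
      rw [hlim, iInf_apply]
      exact Set.mem_iInter.2 fun o' => ih o'.1 o'.2 i hs
  exact fun i => key _ i
end

section
/- For every knowledge model for the initial game H, G_{K*RAT(br^g)} ⊆ T_{sd^l}^∞: common knowledge that each player plays a best response (within H_i, to some joint pure strategy of the opponents he considers possible) implies that the players choose only strategies that survive the (possibly transfinite) iterated elimination of strictly dominated strategies. -/
/-!
Epistemic analysis of arbitrary strategic games. The initial game `H` has
players `ι`, strategy sets `S i` (the full types, all nonempty) and payoff
functions `p i`. A restriction of `H` is a family `G : ∀ i, Set (S i)`,
ordered componentwise; this is a complete lattice with largest element `⊤ = H`.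
-/

open Set

universe u

/-- for every knowledge model for the initial game `H`,
`G_{K*RAT(br^g)} ⊆ T_{sd^l}^∞`: common knowledge that each player plays a best
response (within `H_i`, to some joint pure strategy of the opponents he considers
possible) implies that the players choose only strategies surviving the (possibly
transfinite) iterated elimination of strictly dominated strategies. -/
theorem restr_commonKnowledge_RAT_brg_le_outcome_sdl {ι : Type u} [DecidableEq ι]
    {S : ι → Type u} [∀ i, Nonempty (S i)] (p : ∀ i : ι, (∀ j, S j) → ℝ)
    {Ω : Type u} [Nonempty Ω] (sb : ∀ i, Ω → S i) (P : ι → Ω → Set Ω)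
    (hP1 : ∀ i ω, (P i ω).Nonempty)
    (hP2 : ∀ i ω ω', ω' ∈ P i ω → P i ω' = P i ω)
    (hP3 : ∀ i ω, ω ∈ P i ω) :
    restrOf sb (commonBelief P (RAT (brg p) sb P)) ≤ outcome (Topr (sdl p)) := by
  classical
  set T := Topr (sdl p) with hT
  set E := commonBelief P (RAT (brg p) sb P) with hE
  set G := restrOf sb E with hG
  -- P i ω ⊆ E for ω ∈ E
  have hPE : ∀ i ω, ω ∈ E → P i ω ⊆ E := by
    intro i ω hω ω' hω'
    rw [hE] at hω ⊢
    simp only [commonBelief, Set.mem_iInter] at hω ⊢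
    intro k
    have h2 := hω (k + 1)
    rw [Function.iterate_succ_apply'] at h2
    exact h2 i hω'
  -- closure: every strategy in G is a best response within G
  have hclosed : ∀ i, ∀ s ∈ G i, brg p i s G := by
    rintro i s ⟨ω, hω, rfl⟩
    -- ω ∈ RAT
    have hωRAT : ω ∈ RAT (brg p) sb P := by
      have h1 : ω ∈ (box P)^[1] (RAT (brg p) sb P) := by
        have := Set.mem_iInter.mp hω 0
        simpa using this
      exact h1 i (hP3 i ω)
    have hbrg := hωRAT i
    obtain ⟨t, ht, hopt⟩ := hbrg
    refine ⟨t, fun j hj => ?_, hopt⟩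
    obtain ⟨ω', hω', hω''⟩ := ht j hj
    exact ⟨ω', hPE i ω hω hω', hω''⟩
  -- brg implies sdl
  have hbrg_sdl : ∀ (i : ι) (s : S i) (G' : ∀ j, Set (S j)),
      brg p i s G' → sdl p i s G' := by
    rintro i s G' ⟨t, ht, hopt⟩ ⟨s', _, hdom⟩
    exact absurd (hopt s') (not_le.mpr (hdom t ht))
  -- brg monotone
  have hbrg_mono : ∀ (i : ι) (s : S i) (G' G'' : ∀ j, Set (S j)),
      G' ≤ G'' → brg p i s G' → brg p i s G'' := by
    rintro i s G' G'' hle ⟨t, ht, hopt⟩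
    exact ⟨t, fun j hj => hle j (ht j hj), hopt⟩
  -- transfinite induction: G ≤ lfpIter T o for all o
  have key : ∀ o : Ordinal.{u}, G ≤ lfpIter T o := by
    intro o
    induction o using Ordinal.limitRecOn with
    | zero =>
      have : lfpIter T 0 = ⊤ := Ordinal.limitRecOn_zero _ _ _
      simp [this]
    | add_one o ih =>
      have hstep : lfpIter T (o + 1) = T (lfpIter T o) :=
        Ordinal.limitRecOn_add_one _ _ _ _
      rw [hstep]
      intro i s hs
      exact ⟨ih i hs, hbrg_sdl i s _ (hbrg_mono i s G _ ih (hclosed i s hs))⟩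
    | limit o ho ih =>
      have hlim : lfpIter T o = ⨅ o' : {o' : Ordinal.{u} // o' < o}, lfpIter T o'.1 :=
        Ordinal.limitRecOn_limit _ _ _ _ ho
      rw [hlim]
      exact le_iInf fun o' => ih o'.1 o'.2
  exact key _
end

section
/- Assume the initial game H is finite. For every belief model for H, G_{RAT(br^g) ∩ B*RAT(br^g)} ⊆ T_{msd^l}^∞, where br^g is the global best response property with beliefs being joint mixed strategies of the opponents, and T_{msd^l}^∞ is the outcome of iterated elimination of strategies strictly dominated by a mixed strategy over the current restriction. -/
/-!
Epistemic analysis of arbitrary strategic games. The initial game `H` has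
players `ι`, strategy sets `S i` (the full types, all nonempty) and payoff
functions `p i`. A restriction of `H` is a family `G : ∀ i, Set (S i)`,
ordered componentwise; this is a complete lattice with largest element `⊤ = H`.
-/

open Set

universe u

/-- `m` is a probability distribution over the subset `A` of player strategies:
nonnegative, sums to `1`, and supported in `A`. -/
def IsDistOn {α : Type u} [Fintype α] (A : Set α) (m : α → ℝ) : Prop :=
  (∀ s, 0 ≤ m s) ∧ (∑ s, m s = 1) ∧ ∀ s, m s ≠ 0 → s ∈ A

/-- The full strategy profile obtained from player `i`'s strategy `si` and a joint
strategy `t` of his opponents. -/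
def extProf {ι : Type u} [DecidableEq ι] {S : ι → Type u} (i : ι) (si : S i)
    (t : ∀ j : {j : ι // j ≠ i}, S j.1) : ∀ j, S j :=
  fun j => if h : j = i then cast (congrArg S h.symm) si else t ⟨j, h⟩

/-- Expected payoff `p_i(si, μ)` of player `i` playing `si` against the joint mixed
strategy `μ = (m_j)_{j ≠ i}` of his opponents (entry `i` of `μ` is ignored):
`Σ_{s_{-i}} (Π_{j ≠ i} m_j(s_j)) p_i(si, s_{-i})`. -/
def jointMixedPayoff {ι : Type u} [Fintype ι] [DecidableEq ι] {S : ι → Type u}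
    [∀ i, Fintype (S i)] (p : ∀ i : ι, (∀ j, S j) → ℝ) (i : ι) (si : S i)
    (μ : ∀ j, S j → ℝ) : ℝ :=
  ∑ t : ∀ j : {j : ι // j ≠ i}, S j.1,
    (∏ j : {j : ι // j ≠ i}, μ j.1 (t j)) * p i (extProf i si t)

/-- `br^g_i(s, G)` with mixed beliefs: `s` is a best response in `H_i` to some joint
mixed strategy `μ = (m_j)_{j ≠ i}` of the opponents with `m_j ∈ Δ G_j`. -/
def brgMixed {ι : Type u} [Fintype ι] [DecidableEq ι] {S : ι → Type u}
    [∀ i, Fintype (S i)] (p : ∀ i : ι, (∀ j, S j) → ℝ) (i : ι) (s : S i)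
    (G : ∀ j, Set (S j)) : Prop :=
  ∃ μ : ∀ j, S j → ℝ, (∀ j, j ≠ i → IsDistOn (G j) (μ j)) ∧
    ∀ s' : S i, jointMixedPayoff p i s' μ ≤ jointMixedPayoff p i s μ

/-- Expected payoff of the mixed strategy `m` of player `i` against the joint
strategy of the opponents given by the profile `t` (entry `i` of `t` is ignored). -/
def mixedPayoff {ι : Type u} [Fintype ι] [DecidableEq ι] {S : ι → Type u}
    [∀ i, Fintype (S i)] (p : ∀ i : ι, (∀ j, S j) → ℝ) (i : ι) (m : S i → ℝ)
    (t : ∀ j, S j) : ℝ :=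
  ∑ s : S i, m s * p i (Function.update t i s)

/-- `msd^l_i(s, G)`: `s` is not strictly dominated on `G` by any mixed strategy in
`Δ G_i` (a distribution over the current restriction). -/
def msdl {ι : Type u} [Fintype ι] [DecidableEq ι] {S : ι → Type u}
    [∀ i, Fintype (S i)] (p : ∀ i : ι, (∀ j, S j) → ℝ) (i : ι) (s : S i)
    (G : ∀ j, Set (S j)) : Prop :=
  ¬ ∃ m : S i → ℝ, IsDistOn (G i) m ∧
    ∀ t : ∀ j, S j, (∀ j, j ≠ i → t j ∈ G j) →
      p i (Function.update t i s) < mixedPayoff p i m t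


section auxLemmas
set_option linter.unusedSectionVars false

variable {ι : Type u} [Fintype ι] [DecidableEq ι] {S : ι → Type u} [∀ i, Fintype (S i)]

lemma update_extProf {i : ι} (si s' : S i) (t : ∀ j : {j : ι // j ≠ i}, S j.1) :
    Function.update (extProf i si t) i s' = extProf i s' t := by
  funext j
  rcases eq_or_ne j i with rfl | h
  · simp [extProf]
  · simp [Function.update_of_ne h, extProf, h]

lemma brg_imp_msdl (p : ∀ i : ι, (∀ j, S j) → ℝ) (i : ι) (s : S i)
    {G G' : ∀ j, Set (S j)} (hsub : ∀ j, G j ⊆ G' j)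
    (hbr : brgMixed p i s G) : msdl p i s G' := by
  obtain ⟨μ, hμ, hmax⟩ := hbr
  rintro ⟨m, ⟨hm0, hm1, hmsupp⟩, hdom⟩
  set w : (∀ j : {j : ι // j ≠ i}, S j.1) → ℝ := fun t => ∏ j, μ j.1 (t j) with hw
  have hw0 : ∀ t, 0 ≤ w t := fun t => Finset.prod_nonneg fun j _ => (hμ j.1 j.2).1 _
  have hw1 : ∑ t, w t = 1 := by
    have := Finset.prod_univ_sum (fun j : {j : ι // j ≠ i} => (Finset.univ : Finset (S j.1)))
      (fun j b => μ j.1 b)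
    rw [Fintype.piFinset_univ] at this
    rw [hw, ← this]
    simp only [(fun j : {j : ι // j ≠ i} => (hμ j.1 j.2).2.1 : ∀ j : {j : ι // j ≠ i}, ∑ b, μ j.1 b = 1)]
    simp
  -- strict pointwise inequality on the support of w
  have hpt : ∀ t, w t ≠ 0 →
      p i (extProf i s t) < ∑ s' : S i, m s' * p i (extProf i s' t) := by
    intro t ht
    have hmem : ∀ j, j ≠ i → extProf i s t j ∈ G' j := by
      intro j hj
      have hμj : μ j (t ⟨j, hj⟩) ≠ 0 := by
        have := (Finset.prod_ne_zero_iff).1 ht ⟨j, hj⟩ (Finset.mem_univ _)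
        exact this
      have : t ⟨j, hj⟩ ∈ G j := (hμ j hj).2.2 _ hμj
      have hx : extProf i s t j = t ⟨j, hj⟩ := by simp [extProf, hj]
      rw [hx]; exact hsub j this
    have := hdom (extProf i s t) hmem
    rw [update_extProf] at this
    have hmp : mixedPayoff p i m (extProf i s t) = ∑ s' : S i, m s' * p i (extProf i s' t) := by
      unfold mixedPayoff
      refine Finset.sum_congr rfl fun s' _ => ?_
      rw [update_extProf]
    rw [hmp] at this
    exact this
  have hex : ∃ t, w t ≠ 0 := by
    by_contra hcon
    push_neg at hcon
    rw [Finset.sum_eq_zero (fun t _ => hcon t)] at hw1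
    exact zero_ne_one hw1
  -- the chain of inequalities
  have hlt : jointMixedPayoff p i s μ < ∑ t, w t * ∑ s' : S i, m s' * p i (extProf i s' t) := by
    unfold jointMixedPayoff
    apply Finset.sum_lt_sum
    · intro t _
      rcases eq_or_ne (w t) 0 with h | h
      · have h0 : (∏ j : {j : ι // j ≠ i}, μ j.1 (t j)) = 0 := h
        rw [h0, show w t = 0 from h]
        simp
      · exact mul_le_mul_of_nonneg_left (hpt t h).le (hw0 t)
    · obtain ⟨t, ht⟩ := hex
      exact ⟨t, Finset.mem_univ _,
        mul_lt_mul_of_pos_left (hpt t ht) (lt_of_le_of_ne (hw0 t) (Ne.symm ht))⟩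
  have hswap : ∑ t, w t * ∑ s' : S i, m s' * p i (extProf i s' t)
      = ∑ s' : S i, m s' * jointMixedPayoff p i s' μ := by
    unfold jointMixedPayoff
    simp_rw [Finset.mul_sum]
    rw [Finset.sum_comm]
    refine Finset.sum_congr rfl fun s' _ => ?_
    refine Finset.sum_congr rfl fun t _ => ?_
    simp only [hw]
    ring
  rw [hswap] at hlt
  have hle : ∑ s' : S i, m s' * jointMixedPayoff p i s' μ
      ≤ ∑ s' : S i, m s' * jointMixedPayoff p i s μ :=
    Finset.sum_le_sum fun s' _ => mul_le_mul_of_nonneg_left (hmax s') (hm0 s')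
  have heq : ∑ s' : S i, m s' * jointMixedPayoff p i s μ = jointMixedPayoff p i s μ := by
    rw [← Finset.sum_mul, hm1, one_mul]
  rw [heq] at hle
  exact absurd (lt_of_lt_of_le hlt hle) (lt_irrefl _)

end auxLemmas

/-- assume the initial game `H` is finite. For every belief model
for `H`, `G_{RAT(br^g) ∩ B*RAT(br^g)} ⊆ T_{msd^l}^∞`, where `br^g` is the global
best response property with beliefs being joint mixed strategies of the opponents,
and `T_{msd^l}^∞` is the outcome of iterated elimination of strategies strictly
dominated by a mixed strategy over the current restriction. -/
theorem restr_RAT_brgMixed_inter_commonBelief_le_outcome_msdl {ι : Type u}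
    [Fintype ι] [DecidableEq ι] {S : ι → Type u} [∀ i, Fintype (S i)]
    [∀ i, Nonempty (S i)] (p : ∀ i : ι, (∀ j, S j) → ℝ)
    {Ω : Type u} [Nonempty Ω] (sb : ∀ i, Ω → S i) (P : ι → Ω → Set Ω)
    (hP1 : ∀ i ω, (P i ω).Nonempty)
    (hP2 : ∀ i ω ω', ω' ∈ P i ω → P i ω' = P i ω) :
    restrOf sb (RAT (brgMixed p) sb P ∩ commonBelief P (RAT (brgMixed p) sb P))
      ≤ outcome (Topr (msdl p)) := by
  set φ := brgMixed p
  set E := RAT φ sb P ∩ commonBelief P (RAT φ sb P) with hE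
  set T := Topr (msdl p) with hT
  -- closedness of E under beliefs
  have hclosed : ∀ ω ∈ E, ∀ i, P i ω ⊆ E := by
    intro ω hω i ω' hω'
    obtain ⟨hrat, hcb⟩ := hω
    have hcb' : ∀ k : ℕ, ω ∈ (box P)^[k + 1] (RAT φ sb P) := by
      intro k; exact Set.mem_iInter.1 hcb k
    constructor
    · -- ω' ∈ RAT
      have h0 := hcb' 0
      rw [Function.iterate_one] at h0
      exact h0 i hω'
    · -- ω' ∈ commonBelief
      refine Set.mem_iInter.2 fun k => ?_
      have hk := hcb' (k + 1)
      rw [Function.iterate_succ_apply'] at hk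
      exact hk i hω'
  -- main transfinite induction
  have main : ∀ α : Ordinal.{u}, restrOf sb E ≤ lfpIter T α := by
    intro α
    induction α using Ordinal.induction with
    | _ α IH =>
      rcases Ordinal.zero_or_succ_or_isSuccLimit α with rfl | ⟨β, rfl⟩ | hlim
      · rw [lfpIter, Ordinal.limitRecOn_zero]
        exact le_top
      · rw [lfpIter, Ordinal.limitRecOn_succ]
        have IHβ : restrOf sb E ≤ lfpIter T β := IH β (Order.lt_succ β)
        intro i s hs
        obtain ⟨ω, hω, rfl⟩ := hs
        refine ⟨IHβ i ⟨ω, hω, rfl⟩, ?_⟩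
        have hbr : brgMixed p i (sb i ω) (restrOf sb (P i ω)) := hω.1 i
        refine brg_imp_msdl p i (sb i ω) (fun j => ?_) hbr
        intro x hx
        obtain ⟨ω', hω', rfl⟩ := hx
        exact IHβ j ⟨ω', hclosed ω hω i hω', rfl⟩
      · rw [lfpIter, Ordinal.limitRecOn_limit _ _ _ _ hlim]
        exact le_iInf fun o' => IH o'.1 o'.2
  exact main _
end
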